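/- Let U₁ = diag(η₂,η₁,η₁), U₂ = diag(η₁,η₂,η₁), U₃ = diag(η₁,η₁,η₃=η₂ in the third slot), i.e. Uᵢ = η₁ I + (η₂−η₁) eᵢ⊗eᵢ, with η₁, η₂ > 0 and η₁ ≠ η₂. There is no probability measure ν supported on finitely many matrices in K = SO(3)U₁ ∪ SO(3)U₂ ∪ SO(3)U₃ whose support meets SO(3)U_j ∪ SO(3)U_k in at most two matrices for some j ≠ k, and which satisfies simultaneously ⟨ν, id⟩ = η₁^{2/3}η₂^{1/3} I and ⟨ν, cof⟩ = cof(η₁^{2/3}η₂^{1/3} I). -/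

import Mathlib

open Matrix

/-- The rotation group SO(3) as a set of 3×3 real matrices. -/
def SO3 : Set (Matrix (Fin 3) (Fin 3) ℝ) := {R | R * Rᵀ = 1 ∧ R.det = 1}

/-- The cofactor matrix. -/
def cof (A : Matrix (Fin 3) (Fin 3) ℝ) : Matrix (Fin 3) (Fin 3) ℝ := A.adjugateᵀ

/-- The three tetragonal variants Uᵢ = η₁ I + (η₂ - η₁) eᵢ⊗eᵢ. -/
def tetraVariant (η₁ η₂ : ℝ) (i : Fin 3) : Matrix (Fin 3) (Fin 3) ℝ :=
  η₁ • (1 : Matrix (Fin 3) (Fin 3) ℝ)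
    + (η₂ - η₁) • Matrix.vecMulVec (Pi.single i 1) (Pi.single i 1)

/-- The energy well SO(3)U. -/
def well (U : Matrix (Fin 3) (Fin 3) ℝ) : Set (Matrix (Fin 3) (Fin 3) ℝ) :=
  (fun R => R * U) '' SO3

lemma tetra_eq_diagonal (η₁ η₂ : ℝ) (p : Fin 3) :
    tetraVariant η₁ η₂ p = Matrix.diagonal (fun j => if j = p then η₂ else η₁) := by
  ext j k
  simp only [tetraVariant, Matrix.add_apply, Matrix.smul_apply, Matrix.one_apply,
    Matrix.vecMulVec_apply, Pi.single_apply, smul_eq_mul, Matrix.diagonal_apply]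
  by_cases hjk : j = k <;> by_cases hjp : j = p <;> by_cases hkp : k = p <;>
    simp [hjk, hjp, hkp] <;> ring_nf <;> simp_all <;> ring

lemma adjugate_so3 (R : Matrix (Fin 3) (Fin 3) ℝ) (hR : R ∈ SO3) : R.adjugate = Rᵀ := by
  calc R.adjugate = R.adjugate * (R * Rᵀ) := by rw [hR.1, mul_one]
  _ = (R.adjugate * R) * Rᵀ := by rw [mul_assoc]
  _ = Rᵀ := by rw [Matrix.adjugate_mul, hR.2]; simp

lemma cof_mul (R U : Matrix (Fin 3) (Fin 3) ℝ) (hR : R ∈ SO3) : cof (R * U) = R * cof U := by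
  unfold cof
  rw [Matrix.adjugate_mul_distrib, Matrix.transpose_mul, adjugate_so3 R hR,
    Matrix.transpose_transpose]

lemma cof_smul_one (x : ℝ) : cof (x • (1 : Matrix (Fin 3) (Fin 3) ℝ)) = (x^2) • 1 := by
  unfold cof
  rw [Matrix.adjugate_smul, Matrix.adjugate_one, Matrix.transpose_smul, Matrix.transpose_one]
  norm_num

lemma cof_tetra (η₁ η₂ : ℝ) (h₁ : η₁ ≠ 0) (h₂ : η₂ ≠ 0) (p : Fin 3) :
    cof (tetraVariant η₁ η₂ p)
      = Matrix.diagonal (fun j => if j = p then η₁*η₁ else η₁*η₂) := by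
  rw [tetra_eq_diagonal]
  unfold cof
  rw [Matrix.adjugate_diagonal, Matrix.diagonal_transpose]
  have htot : (∏ j, (if j = p then η₂ else η₁)) = η₂ * (η₁ * η₁) := by
    fin_cases p <;> rw [Fin.prod_univ_three] <;> norm_num [Fin.ext_iff] <;> ring
  have hfun : ∀ i, (∏ j ∈ Finset.univ.erase i, (if j = p then η₂ else η₁))
      = (if i = p then η₁*η₁ else η₁*η₂) := by
    intro i
    have hprod := Finset.mul_prod_erase Finset.univ
      (fun j => if j = p then η₂ else η₁) (Finset.mem_univ i)
    by_cases h : i = p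
    · rw [if_pos h] at hprod
      rw [if_pos h]
      exact mul_left_cancel₀ h₂ (hprod.trans htot)
    · rw [if_neg h] at hprod
      rw [if_neg h]
      exact mul_left_cancel₀ h₁ (hprod.trans (htot.trans (by ring)))
  ext a b
  by_cases h : a = b <;> simp [Matrix.diagonal_apply, h, hfun]

lemma so3_col_norm (R : Matrix (Fin 3) (Fin 3) ℝ) (hR : R ∈ SO3) (k : Fin 3) :
    ∑ j, R j k * R j k = 1 := by
  have h : Rᵀ * R = 1 := mul_eq_one_comm.mp hR.1
  have h2 := Matrix.ext_iff.mpr h k k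
  rw [Matrix.mul_apply] at h2
  simpa [Matrix.transpose_apply, Matrix.one_apply] using h2

lemma so3_row_norm (R : Matrix (Fin 3) (Fin 3) ℝ) (hR : R ∈ SO3) (j : Fin 3) :
    ∑ k, R j k * R j k = 1 := by
  have h2 := Matrix.ext_iff.mpr hR.1 j j
  rw [Matrix.mul_apply] at h2
  simpa [Matrix.transpose_apply, Matrix.one_apply] using h2

lemma so3_entry_le (R : Matrix (Fin 3) (Fin 3) ℝ) (hR : R ∈ SO3) (j k : Fin 3) :
    R j k ≤ 1 := by
  have h := so3_row_norm R hR j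
  have h2 : R j k * R j k ≤ ∑ k', R j k' * R j k' :=
    Finset.single_le_sum (f := fun k' => R j k' * R j k')
      (fun k' _ => mul_self_nonneg _) (Finset.mem_univ k)
  nlinarith [h, h2]

lemma wells_ne {η₁ η₂ : ℝ} (h₁ : 0 < η₁) (h₂ : 0 < η₂) (hne : η₁ ≠ η₂) {p q : Fin 3}
    (hpq : p ≠ q) {R R' : Matrix (Fin 3) (Fin 3) ℝ} (hR : R ∈ SO3) (hR' : R' ∈ SO3) :
    R * tetraVariant η₁ η₂ p ≠ R' * tetraVariant η₁ η₂ q := by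
  intro h
  have he : ∀ j, R j p * η₂ = R' j p * η₁ := by
    intro j
    have h' := Matrix.ext_iff.mpr h j p
    rw [tetra_eq_diagonal, tetra_eq_diagonal, Matrix.mul_diagonal, Matrix.mul_diagonal] at h'
    simpa [hpq] using h'
  have hcR := so3_col_norm R hR p
  have hcR' := so3_col_norm R' hR' p
  have hkey : η₂ * η₂ = η₁ * η₁ := by
    calc η₂*η₂ = η₂*η₂ * ∑ j, R j p * R j p := by rw [hcR]; ring
    _ = ∑ j, (R j p * η₂)*(R j p * η₂) := by
        rw [Finset.mul_sum]; exact Finset.sum_congr rfl fun j _ => by ring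
    _ = ∑ j, (R' j p * η₁)*(R' j p * η₁) :=
        Finset.sum_congr rfl fun j _ => by rw [he j]
    _ = η₁*η₁ * ∑ j, R' j p * R' j p := by
        rw [Finset.mul_sum]; exact Finset.sum_congr rfl fun j _ => by ring
    _ = η₁*η₁ := by rw [hcR']; ring
  have : η₁ = η₂ := by nlinarith
  exact hne this

set_option maxHeartbeats 1600000 in
/-- No finitely supported probability measure on the three tetragonal wells, meeting
two of the wells in at most two matrices, has barycentre η₁^{2/3}η₂^{1/3} I and
cofactor barycentre cof(η₁^{2/3}η₂^{1/3} I). -/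
theorem four_gradient_theorem (η₁ η₂ : ℝ) (h₁ : 0 < η₁) (h₂ : 0 < η₂) (hne : η₁ ≠ η₂) :
    ¬ ∃ (m : ℕ) (l : Fin m → ℝ) (A : Fin m → Matrix (Fin 3) (Fin 3) ℝ),
      (∀ i, 0 ≤ l i) ∧ (∑ i, l i = 1) ∧
      (∀ i, A i ∈ ⋃ p : Fin 3, well (tetraVariant η₁ η₂ p)) ∧
      (∃ p q : Fin 3, p ≠ q ∧
        ({B | ∃ i, 0 < l i ∧ A i = B} ∩
          (well (tetraVariant η₁ η₂ p) ∪ well (tetraVariant η₁ η₂ q))).encard ≤ 2) ∧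
      (∑ i, l i • A i
        = (η₁ ^ ((2 : ℝ)/3) * η₂ ^ ((1 : ℝ)/3)) • (1 : Matrix (Fin 3) (Fin 3) ℝ)) ∧
      (∑ i, l i • cof (A i)
        = cof ((η₁ ^ ((2 : ℝ)/3) * η₂ ^ ((1 : ℝ)/3)) • (1 : Matrix (Fin 3) (Fin 3) ℝ))) := by
  rintro ⟨m, l, A, hl0, hsum, hwell, ⟨p, q, hpq, hcard⟩, hmean, hcof⟩
  have hη₁ : η₁ ≠ 0 := ne_of_gt h₁
  have hη₂ : η₂ ≠ 0 := ne_of_gt h₂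
  -- choose rotations and variants
  have hchoice : ∀ i, ∃ (pi : Fin 3) (R : Matrix (Fin 3) (Fin 3) ℝ),
      R ∈ SO3 ∧ R * tetraVariant η₁ η₂ pi = A i := by
    intro i
    rcases Set.mem_iUnion.1 (hwell i) with ⟨pi, R, hR, hRA⟩
    exact ⟨pi, R, hR, hRA⟩
  choose P R hRso hRA using hchoice
  -- the parameter u
  set u : ℝ := (η₂ / η₁) ^ ((1:ℝ)/3) with hudef
  have hu : 0 < u := Real.rpow_pos_of_pos (div_pos h₂ h₁) _
  have hu3 : η₁ * u ^ 3 = η₂ := by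
    have h3 : u ^ (3:ℕ) = η₂ / η₁ := by
      rw [hudef, ← Real.rpow_natCast ((η₂/η₁) ^ ((1:ℝ)/3)) 3,
        ← Real.rpow_mul (le_of_lt (div_pos h₂ h₁))]
      norm_num
    rw [h3]
    field_simp
  have hune : u ≠ 1 := by
    intro h
    rw [h] at hu3
    simp at hu3
    exact hne hu3
  have hlam : η₁ ^ ((2:ℝ)/3) * η₂ ^ ((1:ℝ)/3) = η₁ * u := by
    rw [hudef, Real.div_rpow h₂.le h₁.le]
    rw [mul_div_assoc']
    rw [eq_div_iff (by positivity : η₁ ^ ((1:ℝ)/3) ≠ 0)]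
    rw [mul_comm (η₁ ^ ((2:ℝ)/3)) (η₂ ^ ((1:ℝ)/3)), mul_assoc, ← Real.rpow_add h₁]
    norm_num
    ring
  -- entrywise formulas
  have hAentry : ∀ i j k, A i j k = R i j k * (if k = P i then η₂ else η₁) := by
    intro i j k
    rw [← hRA i, tetra_eq_diagonal, Matrix.mul_diagonal]
  have hCentry : ∀ i j k, cof (A i) j k = R i j k * (if k = P i then η₁*η₁ else η₁*η₂) := by
    intro i j k
    rw [← hRA i, cof_mul _ _ (hRso i), cof_tetra η₁ η₂ hη₁ hη₂ (P i), Matrix.mul_diagonal]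
  -- the two barycentre equations, entrywise
  have E1 : ∀ j k, (∑ i, l i * (R i j k * (if k = P i then η₂ else η₁)))
      = (η₁*u) * (if j = k then (1:ℝ) else 0) := by
    intro j k
    have h := Matrix.ext_iff.mpr hmean j k
    rw [Matrix.sum_apply] at h
    simp only [Matrix.smul_apply, smul_eq_mul, Matrix.one_apply] at h
    rw [← hlam, ← h]
    exact Finset.sum_congr rfl fun i _ => by rw [hAentry]
  have E2 : ∀ j k, (∑ i, l i * (R i j k * (if k = P i then η₁*η₁ else η₁*η₂)))
      = ((η₁*u)*(η₁*u)) * (if j = k then (1:ℝ) else 0) := by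
    intro j k
    have hc : (∑ i, l i • cof (A i))
        = (((η₁ ^ ((2:ℝ)/3) * η₂ ^ ((1:ℝ)/3)))^2) • (1 : Matrix (Fin 3) (Fin 3) ℝ) := by
      rw [hcof, cof_smul_one]
    have h := Matrix.ext_iff.mpr hc j k
    rw [Matrix.sum_apply] at h
    simp only [Matrix.smul_apply, smul_eq_mul, Matrix.one_apply] at h
    have hsq : ((η₁ ^ ((2:ℝ)/3) * η₂ ^ ((1:ℝ)/3)))^2 = (η₁*u)*(η₁*u) := by
      rw [hlam]; ring
    rw [← hsq, ← h]
    exact Finset.sum_congr rfl fun i _ => by rw [hCentry]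
  -- solved equations
  have key : ∀ j k,
      (u^2 - u + 1) * (∑ i, l i * R i j k) = u * (if j = k then (1:ℝ) else 0) ∧
      (u^4 + u^2 + 1) * (∑ i, if P i = k then l i * R i j k else 0)
        = u^2 * (if j = k then (1:ℝ) else 0) := by
    intro j k
    have hE1 := E1 j k
    have hE2 := E2 j k
    set δ := (if j = k then (1:ℝ) else 0) with hδ
    set S := ∑ i, l i * R i j k with hSdef
    set Mm := ∑ i, if P i = k then l i * R i j k else 0 with hMdef
    have e1 : η₁ * S + (η₂ - η₁) * Mm = (η₁*u) * δ := by
      rw [hSdef, hMdef, Finset.mul_sum, Finset.mul_sum, ← Finset.sum_add_distrib, ← hE1]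
      refine Finset.sum_congr rfl fun i _ => ?_
      by_cases h : P i = k
      · rw [if_pos h, if_pos h.symm]; ring
      · rw [if_neg h, if_neg (fun hh => h hh.symm)]; ring
    have e2 : (η₁*η₂) * S + (η₁*η₁ - η₁*η₂) * Mm = ((η₁*u)*(η₁*u)) * δ := by
      rw [hSdef, hMdef, Finset.mul_sum, Finset.mul_sum, ← Finset.sum_add_distrib, ← hE2]
      refine Finset.sum_congr rfl fun i _ => ?_
      by_cases h : P i = k
      · rw [if_pos h, if_pos h.symm]; ring
      · rw [if_neg h, if_neg (fun hh => h hh.symm)]; ring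
    have f1 : S + (u^3 - 1) * Mm = u * δ := by
      apply mul_left_cancel₀ hη₁
      linear_combination e1 + Mm * hu3
    have f2 : u^3 * S + (1 - u^3) * Mm = (u*u) * δ := by
      apply mul_left_cancel₀ (mul_ne_zero hη₁ hη₁)
      linear_combination e2 + (η₁*S - η₁*Mm) * hu3
    constructor
    · apply mul_left_cancel₀ (ne_of_gt (show (0:ℝ) < 1 + u by positivity))
      linear_combination f1 + f2
    · apply mul_left_cancel₀ (mul_ne_zero (sub_ne_zero.mpr hune)
        (ne_of_gt (show (0:ℝ) < u + 1 by positivity)))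
      linear_combination u^3 * f1 - f2
  have hS := fun j k => (key j k).1
  have hM := fun j k => (key j k).2
  have hDpos : (0:ℝ) < u^4 + u^2 + 1 := by positivity
  -- each of the three wells carries positive mass
  have hexists : ∀ w : Fin 3, ∃ i, P i = w ∧ 0 < l i := by
    intro w
    by_contra hcon
    push_neg at hcon
    have hz : (∑ i, if P i = w then l i * R i w w else 0) = 0 := by
      refine Finset.sum_eq_zero fun i _ => ?_
      by_cases h : P i = w
      · have : l i = 0 := le_antisymm (hcon i h) (hl0 i)
        rw [if_pos h, this, zero_mul]
      · rw [if_neg h]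
    have := hM w w
    rw [hz, if_pos rfl, mul_zero] at this
    nlinarith [hu]
  obtain ⟨i₀, hi₀p, hi₀l⟩ := hexists p
  obtain ⟨i₁, hi₁q, hi₁l⟩ := hexists q
  have hAmem : ∀ i (w : Fin 3), P i = w → A i ∈ well (tetraVariant η₁ η₂ w) := by
    intro i w hw
    exact ⟨R i, hRso i, by rw [← hw]; exact hRA i⟩
  -- uniqueness of the atom in each of the two special wells
  have huniq : ∀ (w w' : Fin 3) (jw : Fin m), (w = p ∧ w' = q) ∨ (w = q ∧ w' = p) →
      P jw = w' → 0 < l jw →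
      ∀ i i', P i = w → P i' = w → 0 < l i → 0 < l i' → A i = A i' := by
    intro w w' jw hww' hjw hjl i i' hi hi' hli hli'
    by_contra hAA
    have hwne : w ≠ w' := by
      rcases hww' with ⟨h1, h2⟩ | ⟨h1, h2⟩ <;> rw [h1, h2]
      · exact hpq
      · exact hpq.symm
    have hw_pq : w = p ∨ w = q := by
      rcases hww' with ⟨h1, _⟩ | ⟨h1, _⟩
      · exact Or.inl h1
      · exact Or.inr h1
    have hw'_pq : w' = p ∨ w' = q := by
      rcases hww' with ⟨_, h2⟩ | ⟨_, h2⟩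
      · exact Or.inr h2
      · exact Or.inl h2
    have hmemT : ∀ (x : Fin 3), (x = p ∨ x = q) → ∀ i'', P i'' = x → 0 < l i'' →
        A i'' ∈ {B | ∃ i3, 0 < l i3 ∧ A i3 = B} ∩
          (well (tetraVariant η₁ η₂ p) ∪ well (tetraVariant η₁ η₂ q)) := by
      intro x hx i'' hix hil
      refine ⟨⟨i'', hil, rfl⟩, ?_⟩
      rcases hx with rfl | rfl
      · exact Or.inl (hAmem i'' _ hix)
      · exact Or.inr (hAmem i'' _ hix)
    have hne1 : A i ≠ A jw := by
      rw [← hRA i, ← hRA jw, hi, hjw]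
      exact wells_ne h₁ h₂ hne hwne (hRso i) (hRso jw)
    have hne2 : A i' ≠ A jw := by
      rw [← hRA i', ← hRA jw, hi', hjw]
      exact wells_ne h₁ h₂ hne hwne (hRso i') (hRso jw)
    have hsub : ({A i, A i', A jw} : Set (Matrix (Fin 3) (Fin 3) ℝ)) ⊆
        {B | ∃ i3, 0 < l i3 ∧ A i3 = B} ∩
          (well (tetraVariant η₁ η₂ p) ∪ well (tetraVariant η₁ η₂ q)) := by
      intro x hx
      rcases hx with rfl | rfl | rfl
      · exact hmemT w hw_pq i hi hli
      · exact hmemT w hw_pq i' hi' hli'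
      · exact hmemT w' hw'_pq jw hjw hjl
    have hc3 : ({A i, A i', A jw} : Set (Matrix (Fin 3) (Fin 3) ℝ)).encard = 3 := by
      rw [Set.encard_insert_of_notMem (by simp [hAA, hne1]), Set.encard_pair hne2]
      decide
    have hle := (Set.encard_mono hsub).trans hcard
    rw [hc3] at hle
    norm_num at hle
  -- total weight of each special well is u^2/(u^4+u^2+1)
  have hwkey : ∀ (w : Fin 3) (i₂ : Fin m), P i₂ = w → 0 < l i₂ →
      (∀ i, P i = w → 0 < l i → A i = A i₂) →
      (u^4+u^2+1) * (∑ i, if P i = w then l i else 0) = u^2 := by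
    intro w i₂ hw hlw hun
    have hcolR : ∀ i, P i = w → 0 < l i → ∀ j, R i j w = R i₂ j w := by
      intro i hiw hil j
      have hAi : R i * tetraVariant η₁ η₂ w = A i := by rw [← hiw]; exact hRA i
      have hAi₂ : R i₂ * tetraVariant η₁ η₂ w = A i₂ := by rw [← hw]; exact hRA i₂
      have hAAe : R i * tetraVariant η₁ η₂ w = R i₂ * tetraVariant η₁ η₂ w := by
        rw [hAi, hAi₂]; exact hun i hiw hil
      have h := Matrix.ext_iff.mpr hAAe j w
      rw [tetra_eq_diagonal, Matrix.mul_diagonal, Matrix.mul_diagonal] at h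
      rw [if_pos rfl] at h
      exact mul_right_cancel₀ hη₂ h
    set W := ∑ i, if P i = w then l i else 0 with hWdef
    have hcol : ∀ j, (∑ i, if P i = w then l i * R i j w else 0) = W * R i₂ j w := by
      intro j
      rw [hWdef, Finset.sum_mul]
      refine Finset.sum_congr rfl fun i _ => ?_
      by_cases h : P i = w
      · rw [if_pos h, if_pos h]
        by_cases hl : 0 < l i
        · rw [hcolR i h hl]
        · have : l i = 0 := le_antisymm (not_lt.1 hl) (hl0 i)
          rw [this]; ring
      · rw [if_neg h, if_neg h]; ring
    have hWnn : 0 ≤ W := Finset.sum_nonneg fun i _ => by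
      by_cases h : P i = w
      · rw [if_pos h]; exact hl0 i
      · rw [if_neg h]
    have hsq : ((u^4+u^2+1) * W)^2 = (u^2)^2 := by
      have hj : ∀ j, (u^4+u^2+1) * (W * R i₂ j w)
          = u^2 * (if j = w then (1:ℝ) else 0) := by
        intro j; rw [← hcol j]; exact hM j w
      calc ((u^4+u^2+1)*W)^2
          = ((u^4+u^2+1)*W)^2 * (∑ j, R i₂ j w * R i₂ j w) := by
            rw [so3_col_norm (R i₂) (hRso i₂) w]; ring
        _ = ∑ j, ((u^4+u^2+1) * (W * R i₂ j w)) * ((u^4+u^2+1) * (W * R i₂ j w)) := by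
            rw [Finset.mul_sum]; exact Finset.sum_congr rfl fun j _ => by ring
        _ = ∑ j, (u^2 * (if j = w then (1:ℝ) else 0))
              * (u^2 * (if j = w then (1:ℝ) else 0)) :=
            Finset.sum_congr rfl fun j _ => by rw [hj j]
        _ = (u^2)^2 := by
            rw [Finset.sum_eq_single_of_mem w (Finset.mem_univ w)
              (fun j _ hjw => by rw [if_neg hjw]; ring)]
            rw [if_pos rfl]; ring
    have hnn : 0 ≤ (u^4+u^2+1) * W := mul_nonneg hDpos.le hWnn
    have hle1 : (u^4+u^2+1) * W ≤ u^2 := by nlinarith [hsq, hnn, sq_nonneg u]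
    have hle2 : u^2 ≤ (u^4+u^2+1) * W := by nlinarith [hsq, hnn, sq_nonneg u]
    linarith
  have hwP : (u^4+u^2+1) * (∑ i, if P i = p then l i else 0) = u^2 :=
    hwkey p i₀ hi₀p hi₀l (fun i hip hil =>
      huniq p q i₁ (Or.inl ⟨rfl, rfl⟩) hi₁q hi₁l i i₀ hip hi₀p hil hi₀l)
  have hwQ : (u^4+u^2+1) * (∑ i, if P i = q then l i else 0) = u^2 :=
    hwkey q i₁ hi₁q hi₁l (fun i hiq hil =>
      huniq q p i₀ (Or.inr ⟨rfl, rfl⟩) hi₀p hi₀l i i₁ hiq hi₁q hil hi₁l)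
  -- the third well index
  have htri' : ∀ a b : Fin 3, a ≠ b → ∃ r : Fin 3, a ≠ r ∧ b ≠ r ∧ ∀ x : Fin 3,
      x = a ∨ x = b ∨ x = r := by decide
  obtain ⟨r, hrp, hrq, htri⟩ := htri' p q hpq
  -- final computation at entry (r, r)
  have hsplit : (∑ i, l i * R i r r)
      = (∑ i, if P i = r then l i * R i r r else 0)
        + ∑ i, (if P i = r then 0 else l i * R i r r) := by
    rw [← Finset.sum_add_distrib]
    refine Finset.sum_congr rfl fun i _ => ?_
    by_cases h : P i = r <;> simp [h]
  have hTb : (∑ i, (if P i = r then 0 else l i * R i r r))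
      ≤ (∑ i, if P i = p then l i else 0) + (∑ i, if P i = q then l i else 0) := by
    rw [← Finset.sum_add_distrib]
    refine Finset.sum_le_sum fun i _ => ?_
    rcases htri (P i) with h | h | h
    · rw [h, if_neg hrp, if_pos rfl, if_neg hpq]
      have hb := so3_entry_le (R i) (hRso i) r r
      nlinarith [hl0 i]
    · rw [h, if_neg hrq, if_neg hpq.symm, if_pos rfl]
      have hb := so3_entry_le (R i) (hRso i) r r
      nlinarith [hl0 i]
    · rw [h, if_pos rfl, if_neg (Ne.symm hrp), if_neg (Ne.symm hrq)]
      norm_num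
  have h6 : (u^4+u^2+1) * (∑ i, l i * R i r r) = u*(u^2+u+1) := by
    have hs := hS r r
    rw [if_pos rfl, mul_one] at hs
    linear_combination (u^2+u+1) * hs
  have h7 := hM r r
  rw [if_pos rfl, mul_one] at h7
  have hma : (u^4+u^2+1) * ((∑ i, if P i = p then l i else 0)
        + (∑ i, if P i = q then l i else 0))
      = (u^4+u^2+1) * (∑ i, if P i = p then l i else 0)
        + (u^4+u^2+1) * (∑ i, if P i = q then l i else 0) := mul_add _ _ _
  have hTD : (u^4+u^2+1) * (∑ i, (if P i = r then 0 else l i * R i r r))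
      ≤ u^2 + u^2 := by
    have hmm := mul_le_mul_of_nonneg_left hTb hDpos.le
    linarith [hmm, hma, hwP, hwQ]
  have h8 : (u^4+u^2+1) * (∑ i, l i * R i r r)
      = (u^4+u^2+1) * (∑ i, if P i = r then l i * R i r r else 0)
        + (u^4+u^2+1) * (∑ i, (if P i = r then 0 else l i * R i r r)) := by
    rw [hsplit]; ring
  have hfin : u*(u^2+u+1) ≤ 3*u^2 := by linarith [h6, h7, h8, hTD]
  have hu1 : u - 1 ≠ 0 := sub_ne_zero.mpr hune
  have hpos : 0 < u*(u-1)^2 :=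
    mul_pos hu (lt_of_le_of_ne (sq_nonneg _) (Ne.symm (pow_ne_zero 2 hu1)))
  nlinarith [hfin, hpos]
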